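/- Let γ₂ < 0 < 1 < γ₁ and 0 < L. Then the equation λ^{γ₁−γ₂} = [(γ₁−1)(γ₂(1−Lλ)+Lλ)] / [(γ₂−1)(γ₁(1−Lλ)+Lλ)] has a unique solution λ in the open interval (0,1), provided L ≥ 1. -/

import Mathlib

noncomputable def Afun (γ₁ γ₂ L l : ℝ) : ℝ := (γ₁ - 1) * (γ₂ * (1 - L * l) + L * l)
noncomputable def Bfun (γ₁ γ₂ L l : ℝ) : ℝ := (γ₂ - 1) * (γ₁ * (1 - L * l) + L * l)

lemma key_lemma (γ₁ γ₂ L : ℝ)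
    (hγ₂ : γ₂ < 0) (hγ₁ : 1 < γ₁) (hL : 1 ≤ L) :
    ∃! l : ℝ, l ∈ Set.Ioo (0 : ℝ) 1 ∧
      l ^ (γ₁ - γ₂) = Afun γ₁ γ₂ L l / Bfun γ₁ γ₂ L l := by
  have hγ₁0 : (0:ℝ) < γ₁ - 1 := by linarith
  have hγ₂0 : γ₂ - 1 < 0 := by linarith
  have hγ₂0' : (γ₂ - 1) ≠ 0 := ne_of_lt hγ₂0
  have hL0 : (0:ℝ) < L := by linarith
  have hp : 0 < γ₁ - γ₂ := by linarith
  set m : ℝ := γ₂ / ((γ₂ - 1) * L) with hm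
  have hden : (γ₂ - 1) * L < 0 := mul_neg_of_neg_of_pos hγ₂0 hL0
  have hm0 : 0 < m := div_pos_of_neg_of_neg hγ₂ hden
  have hLm : L * m = γ₂ / (γ₂ - 1) := by
    rw [hm]; field_simp
  have hLm1 : L * m < 1 := by
    rw [hLm, div_lt_one_of_neg hγ₂0]; linarith
  have hm1 : m < 1 := by nlinarith
  -- B is negative on [0, m]
  have hBneg : ∀ l : ℝ, 0 ≤ l → l ≤ m → Bfun γ₁ γ₂ L l < 0 := by
    intro l h0 h1
    have hll : L * l < 1 := by nlinarith
    have hinner : 0 < γ₁ * (1 - L * l) + L * l := by nlinarith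
    exact mul_neg_of_neg_of_pos hγ₂0 hinner
  -- key algebraic identity for strict monotonicity of the rational part
  have hcross : ∀ x y : ℝ,
      Afun γ₁ γ₂ L x * Bfun γ₁ γ₂ L y - Afun γ₁ γ₂ L y * Bfun γ₁ γ₂ L x
        = ((γ₁ - 1) * (γ₂ - 1) * (γ₁ - γ₂) * L) * (x - y) := by
    intro x y; simp only [Afun, Bfun]; ring
  have hq : (γ₁ - 1) * (γ₂ - 1) * (γ₁ - γ₂) * L < 0 :=
    mul_neg_of_neg_of_pos
      (mul_neg_of_neg_of_pos (mul_neg_of_pos_of_neg hγ₁0 hγ₂0) hp) hL0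
  set h : ℝ → ℝ := fun l => l ^ (γ₁ - γ₂) - Afun γ₁ γ₂ L l / Bfun γ₁ γ₂ L l with hh
  have hmono : StrictMonoOn h (Set.Icc 0 m) := by
    intro x hx y hy hxy
    have hBx := hBneg x hx.1 hx.2
    have hBy := hBneg y hy.1 hy.2
    have h1 : x ^ (γ₁ - γ₂) < y ^ (γ₁ - γ₂) := Real.rpow_lt_rpow hx.1 hxy hp
    have h2 : Afun γ₁ γ₂ L y / Bfun γ₁ γ₂ L y < Afun γ₁ γ₂ L x / Bfun γ₁ γ₂ L x := by
      have hBB : 0 < Bfun γ₁ γ₂ L x * Bfun γ₁ γ₂ L y := mul_pos_of_neg_of_neg hBx hBy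
      have hsub : Afun γ₁ γ₂ L x / Bfun γ₁ γ₂ L x - Afun γ₁ γ₂ L y / Bfun γ₁ γ₂ L y
          = (Afun γ₁ γ₂ L x * Bfun γ₁ γ₂ L y - Afun γ₁ γ₂ L y * Bfun γ₁ γ₂ L x)
            / (Bfun γ₁ γ₂ L x * Bfun γ₁ γ₂ L y) := by
        field_simp [ne_of_lt hBx, ne_of_lt hBy]
      have hnum : 0 < Afun γ₁ γ₂ L x * Bfun γ₁ γ₂ L y - Afun γ₁ γ₂ L y * Bfun γ₁ γ₂ L x := by
        rw [hcross x y]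
        exact mul_pos_of_neg_of_neg hq (by linarith)
      have := div_pos hnum hBB
      linarith [hsub ▸ this]
    simp only [hh]
    linarith
  have hcont : ContinuousOn h (Set.Icc 0 m) := by
    apply ContinuousOn.sub
    · exact ContinuousOn.rpow_const continuousOn_id (fun x _ => Or.inr hp.le)
    · apply ContinuousOn.div
      · exact Continuous.continuousOn (by unfold Afun; fun_prop)
      · exact Continuous.continuousOn (by unfold Bfun; fun_prop)
      · exact fun x hx => ne_of_lt (hBneg x hx.1 hx.2)
  have hh0 : h 0 < 0 := by
    have : (0:ℝ) ^ (γ₁ - γ₂) = 0 := Real.zero_rpow (ne_of_gt hp)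
    simp only [hh, Afun, Bfun, this, mul_zero, sub_zero, add_zero, mul_one]
    have hpos : 0 < (γ₁ - 1) * γ₂ / ((γ₂ - 1) * γ₁) :=
      div_pos_of_neg_of_neg (mul_neg_of_pos_of_neg hγ₁0 hγ₂)
        (mul_neg_of_neg_of_pos hγ₂0 (by linarith))
    linarith
  have hAm : γ₂ * (1 - L * m) + L * m = 0 := by
    rw [hLm]; field_simp; ring
  have hhm : 0 < h m := by
    have : Afun γ₁ γ₂ L m = 0 := by rw [Afun, hAm, mul_zero]
    simp only [hh, this, zero_div, sub_zero]
    exact Real.rpow_pos_of_pos hm0 _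
  -- existence
  obtain ⟨l₀, hl₀mem, hl₀⟩ := intermediate_value_Ioo hm0.le hcont ⟨hh0, hhm⟩
  have hl₀eq : l₀ ^ (γ₁ - γ₂) = Afun γ₁ γ₂ L l₀ / Bfun γ₁ γ₂ L l₀ := by
    have : h l₀ = 0 := hl₀
    simpa [hh, sub_eq_zero] using this
  -- any solution in (0,1) is below m
  have hbelow : ∀ y : ℝ, y ∈ Set.Ioo (0:ℝ) 1 →
      y ^ (γ₁ - γ₂) = Afun γ₁ γ₂ L y / Bfun γ₁ γ₂ L y → y < m := by
    intro y hy hyeq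
    by_contra hge
    push_neg at hge
    have hypos : 0 < y ^ (γ₁ - γ₂) := Real.rpow_pos_of_pos hy.1 _
    have hylt1 : y ^ (γ₁ - γ₂) < 1 := Real.rpow_lt_one hy.1.le hy.2 hp
    have hty : γ₂ / (γ₂ - 1) ≤ L * y := by
      rw [← hLm]
      exact mul_le_mul_of_nonneg_left hge hL0.le
    have hAy : 0 ≤ Afun γ₁ γ₂ L y := by
      have h1 : (1 - γ₂) * (γ₂ / (γ₂ - 1)) = -γ₂ := by field_simp; ring
      have h2 : 0 ≤ γ₂ * (1 - L * y) + L * y := by nlinarith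
      exact mul_nonneg hγ₁0.le h2
    rcases lt_trichotomy (Bfun γ₁ γ₂ L y) 0 with hB | hB | hB
    · have : Afun γ₁ γ₂ L y / Bfun γ₁ γ₂ L y ≤ 0 :=
        div_nonpos_of_nonneg_of_nonpos hAy hB.le
      linarith [hyeq ▸ hypos]
    · rw [hB, div_zero] at hyeq
      linarith
    · have hAB : Afun γ₁ γ₂ L y = Bfun γ₁ γ₂ L y + (γ₁ - γ₂) := by
        simp only [Afun, Bfun]; ring
      have : 1 < Afun γ₁ γ₂ L y / Bfun γ₁ γ₂ L y := by
        rw [hAB]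
        rw [lt_div_iff₀ hB]
        nlinarith
      linarith [hyeq ▸ this]
  refine ⟨l₀, ⟨⟨hl₀mem.1, lt_trans hl₀mem.2 hm1⟩, hl₀eq⟩, ?_⟩
  intro y ⟨hy, hyeq⟩
  have hym : y < m := hbelow y hy hyeq
  have hyh : h y = 0 := by
    simp only [hh, sub_eq_zero]
    exact hyeq
  have hl₀h : h l₀ = 0 := hl₀
  exact hmono.injOn ⟨hy.1.le, hym.le⟩ ⟨hl₀mem.1.le, hl₀mem.2.le⟩ (by rw [hyh, hl₀h])

/-- unique solution `λ ∈ (0,1)` of the boundary equation for the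
floating-strike lookback put. -/
theorem lookback_put_boundary_unique (γ₁ γ₂ L : ℝ)
    (hγ₂ : γ₂ < 0) (hγ₁ : 1 < γ₁) (hL : 1 ≤ L) :
    ∃! l : ℝ, l ∈ Set.Ioo (0 : ℝ) 1 ∧
      l ^ (γ₁ - γ₂) =
        ((γ₁ - 1) * (γ₂ * (1 - L * l) + L * l)) /
          ((γ₂ - 1) * (γ₁ * (1 - L * l) + L * l)) := by
  exact key_lemma γ₁ γ₂ L hγ₂ hγ₁ hL
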